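/- Let u ∈ ℝ^n and p ∈ (0,1). Then the p-superquantile of u equals the optimal value of the Rockafellar–Uryasev variational problem: Q̄_p(u) = min_{η ∈ ℝ} { η + (1/(n(1−p))) Σ_{i=1}^n max(u_i − η, 0) }, and the minimum is attained. -/

import Mathlib

open Finset MeasureTheory

/-- Empirical `p`-quantile of `u ∈ ℝⁿ`:
`Q_p(u) = inf {t : #{i : u i ≤ t} ≥ p·n}`. -/
noncomputable def empQuantile {n : ℕ} (p : ℝ) (u : Fin n → ℝ) : ℝ :=
  sInf {t : ℝ | p * n ≤ ((Finset.univ.filter fun i => u i ≤ t).card : ℝ)}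

/-- Empirical `p`-superquantile of `u ∈ ℝⁿ`:
`Q̄_p(u) = (1/(1-p)) ∫_p^1 Q_s(u) ds`. -/
noncomputable def supQuantile {n : ℕ} (p : ℝ) (u : Fin n → ℝ) : ℝ :=
  (1 - p)⁻¹ * ∫ s in p..1, empQuantile s u

private lemma integral_eq_of_eqOn_Ioc {f : ℝ → ℝ} {a b C : ℝ} (hab : a ≤ b)
    (h : ∀ s ∈ Set.Ioc a b, f s = C) :
    ∫ s in a..b, f s = (b - a) * C := by
  rw [intervalIntegral.integral_of_le hab,
    MeasureTheory.setIntegral_congr_fun measurableSet_Ioc h,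
    MeasureTheory.setIntegral_const, Real.volume_real_Ioc_of_le hab, smul_eq_mul]

/-- Rockafellar–Uryasev: the superquantile is the minimal value (attained) of
`η ↦ η + (1/(n(1-p))) Σ_i max(u_i - η, 0)`. -/
theorem stmt0 {n : ℕ} (hn : 1 ≤ n) (u : Fin n → ℝ) (p : ℝ) (hp0 : 0 < p) (hp1 : p < 1) :
    IsLeast
      (Set.range fun η : ℝ =>
        η + (1 / ((n : ℝ) * (1 - p))) * ∑ i, max (u i - η) 0)
      (supQuantile p u) := by
  have npos : (0:ℝ) < n := by exact_mod_cast hn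
  have h1p : (0:ℝ) < 1 - p := by linarith
  set σ := Tuple.sort u with hσ
  set v : Fin n → ℝ := u ∘ σ with hvdef
  have hvmono : Monotone v := Tuple.monotone_sort u
  set w : ℕ → ℝ := fun m => v ⟨min m (n-1), by omega⟩ with hwdef
  have hwmono : Monotone w := by
    intro a b hab
    exact hvmono (by simp [Fin.le_def]; omega)
  have hwv : ∀ i : Fin n, w i = v i := by
    intro i
    simp only [hwdef]
    congr 1
    exact Fin.ext (show min (i:ℕ) (n-1) = (i:ℕ) by have := i.isLt; omega)
  -- counts agree between u and v
  have hcount : ∀ t : ℝ, (univ.filter fun i => v i ≤ t).card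
      = (univ.filter fun i => u i ≤ t).card := by
    intro t
    apply Finset.card_bij (fun i _ => σ i)
    · intro a ha
      simp only [mem_filter, mem_univ, true_and] at ha ⊢
      exact ha
    · intro a _ b _ hab
      exact σ.injective hab
    · intro b hb
      simp only [mem_filter, mem_univ, true_and] at hb
      refine ⟨σ⁻¹ b, ?_, by simp⟩
      simp only [mem_filter, mem_univ, true_and, hvdef, Function.comp_apply,
        Equiv.Perm.inv_def, Equiv.apply_symm_apply]
      exact hb
  -- count characterization
  have countk : ∀ k : ℕ, 1 ≤ k → k ≤ n → ∀ t : ℝ,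
      (k ≤ (univ.filter fun i => v i ≤ t).card ↔ w (k-1) ≤ t) := by
    intro k hk1 hkn t
    have hwk : w (k-1) = v ⟨k-1, by omega⟩ := by
      simp only [hwdef]
      congr 1
      exact Fin.ext (show min (k-1) (n-1) = k-1 by omega)
    constructor
    · intro h
      by_contra hc
      push_neg at hc
      have hsub : ∀ i ∈ (univ.filter fun i => v i ≤ t), (i : Fin n).val ∈ Finset.range (k-1) := by
        intro i hi
        simp only [mem_filter, mem_univ, true_and] at hi
        simp only [Finset.mem_range]
        by_contra hik
        push_neg at hik
        have : v ⟨k-1, by omega⟩ ≤ v i := hvmono (by simp [Fin.le_def]; omega)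
        rw [← hwk] at this
        linarith
      have := Finset.card_le_card_of_injOn (fun i => (i : Fin n).val) hsub
        (Fin.val_injective.injOn)
      rw [Finset.card_range] at this
      omega
    · intro h
      have hsub : ∀ m ∈ Finset.range k,
          (⟨m % n, Nat.mod_lt _ (by omega)⟩ : Fin n) ∈ (univ.filter fun i => v i ≤ t) := by
        intro m hm
        simp only [Finset.mem_range] at hm
        have hmn : m % n = m := Nat.mod_eq_of_lt (by omega)
        simp only [mem_filter, mem_univ, true_and]
        calc v ⟨m % n, _⟩ ≤ v ⟨k-1, by omega⟩ := hvmono (by simp [Fin.le_def]; omega)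
          _ ≤ t := by rw [← hwk]; exact h
      have := Finset.card_le_card_of_injOn _ hsub (by
        intro a ha b hb hab
        simp only [Finset.coe_range, Set.mem_Iio] at ha hb
        have ha' : a % n = a := Nat.mod_eq_of_lt (by omega)
        have hb' : b % n = b := Nat.mod_eq_of_lt (by omega)
        have := congrArg Fin.val hab
        simpa [ha', hb'] using this)
      rwa [Finset.card_range] at this
  -- quantile formula
  have hQ : ∀ s : ℝ, 0 < s → s ≤ 1 → empQuantile s u = w (⌈s * n⌉₊ - 1) := by
    intro s hs0 hs1
    have hsn : 0 < s * n := by positivity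
    have hk1 : 1 ≤ ⌈s*n⌉₊ := Nat.ceil_pos.mpr hsn
    have hkn : ⌈s*n⌉₊ ≤ n := Nat.ceil_le.mpr (by nlinarith)
    have hset : {t : ℝ | s * n ≤ ((univ.filter fun i => u i ≤ t).card : ℝ)}
        = Set.Ici (w (⌈s*n⌉₊ - 1)) := by
      ext t
      simp only [Set.mem_setOf_eq, Set.mem_Ici]
      rw [← hcount t]
      rw [show (s*n ≤ ((univ.filter fun i => v i ≤ t).card : ℝ)) ↔
          ⌈s*n⌉₊ ≤ (univ.filter fun i => v i ≤ t).card from Nat.ceil_le.symm]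
      exact countk _ hk1 hkn t
    rw [empQuantile, hset, csInf_Ici]
  -- monotonicity of quantile on [p,1]
  have hQmono : MonotoneOn (fun s => empQuantile s u) (Set.Icc p 1) := by
    intro a ha b hb hab
    simp only
    rw [hQ a (lt_of_lt_of_le hp0 ha.1) ha.2, hQ b (lt_of_lt_of_le hp0 hb.1) hb.2]
    exact hwmono (Nat.sub_le_sub_right (Nat.ceil_le_ceil
      (mul_le_mul_of_nonneg_right hab (le_of_lt npos))) 1)
  have hintQ : ∀ a b : ℝ, p ≤ a → a ≤ b → b ≤ 1 →
      IntervalIntegrable (fun s => empQuantile s u) volume a b := by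
    intro a b h1 h2 h3
    exact (hQmono.mono (by rw [Set.uIcc_of_le h2]; exact Set.Icc_subset_Icc h1 h3)).intervalIntegrable
  set k₀ := ⌈p * n⌉₊ with hk₀def
  have hpn : 0 < p * n := by positivity
  have hk₀1 : 1 ≤ k₀ := Nat.ceil_pos.mpr hpn
  have hk₀n : k₀ ≤ n := Nat.ceil_le.mpr (by nlinarith)
  have hk₀ge : p * n ≤ k₀ := Nat.le_ceil _
  have hk₀lt : (k₀:ℝ) < p * n + 1 := Nat.ceil_lt_add_one (le_of_lt hpn)
  -- step interval endpoints
  set A : ℕ → ℝ := fun j => ((k₀:ℝ) + j)/n with hAdef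
  have hA0 : A 0 = (k₀:ℝ)/n := by simp [hAdef]
  have hAm : A (n - k₀) = 1 := by
    simp only [hAdef]
    rw [Nat.cast_sub hk₀n]
    field_simp
    ring
  have hpA0 : p ≤ A 0 := by
    rw [hA0, le_div_iff₀ npos]
    exact hk₀ge
  have hApj : ∀ j : ℕ, p ≤ A j := by
    intro j
    refine le_trans hpA0 ?_
    rw [hA0]
    show (k₀:ℝ)/n ≤ ((k₀:ℝ)+j)/n
    gcongr
    linarith [Nat.cast_nonneg (α := ℝ) j]
  have hnne : (n:ℝ) ≠ 0 := ne_of_gt npos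
  have h1pne : (1:ℝ) - p ≠ 0 := ne_of_gt h1p
  have hA1 : ∀ j : ℕ, j ≤ n - k₀ → A j ≤ 1 := by
    intro j hj
    show ((k₀:ℝ)+j)/n ≤ 1
    rw [div_le_one npos]
    have h : (k₀ + j : ℕ) ≤ n := by omega
    exact_mod_cast h
  have hAmono : ∀ j : ℕ, A j ≤ A (j+1) := by
    intro j
    show ((k₀:ℝ)+j)/n ≤ ((k₀:ℝ)+(j+1:ℕ))/n
    gcongr
    push_cast
    linarith
  -- value of the quantile on each step interval
  have hpiece : ∀ j : ℕ, j < n - k₀ →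
      ∫ s in A j..A (j+1), empQuantile s u = (1/(n:ℝ)) * w (k₀ + j) := by
    intro j hj
    have key : ∀ s ∈ Set.Ioc (A j) (A (j+1)), empQuantile s u = w (k₀ + j) := by
      intro s hs
      obtain ⟨hs1, hs2⟩ := hs
      have hs1' : ((k₀:ℝ)+j)/n < s := hs1
      have hs2' : s ≤ ((k₀:ℝ)+(j+1:ℕ))/n := hs2
      have hs1'' : ((k₀:ℝ)+j) < s * n := by
        rw [div_lt_iff₀ npos] at hs1'
        linarith
      have hs2'' : s * n ≤ ((k₀:ℝ)+(j+1:ℕ)) := by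
        rw [le_div_iff₀ npos] at hs2'
        linarith
      have hps : p < s := lt_of_le_of_lt (hApj j) hs1
      have hs0 : 0 < s := lt_trans hp0 hps
      have hsle1 : s ≤ 1 := le_trans hs2 (hA1 (j+1) (by omega))
      rw [hQ s hs0 hsle1]
      have hceil : ⌈s * n⌉₊ = k₀ + j + 1 := by
        rw [Nat.ceil_eq_iff (by omega)]
        constructor
        · simp only [Nat.add_sub_cancel]
          push_cast
          push_cast at hs1''
          linarith
        · push_cast
          push_cast at hs2''
          linarith
      rw [hceil]
      congr 1
    rw [integral_eq_of_eqOn_Ioc (hAmono j) key]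
    show (((k₀:ℝ)+(j+1:ℕ))/n - ((k₀:ℝ)+j)/n) * w (k₀+j) = _
    push_cast
    field_simp
    try ring
  have hsum_int : ∫ s in (A 0)..(A (n-k₀)), empQuantile s u
      = ∑ j ∈ Finset.range (n-k₀), (1/(n:ℝ)) * w (k₀ + j) := by
    rw [← intervalIntegral.sum_integral_adjacent_intervals
      (fun k hk => hintQ (A k) (A (k+1)) (hApj k) (hAmono k) (hA1 (k+1) (by omega)))]
    exact Finset.sum_congr rfl fun j hj => hpiece j (Finset.mem_range.mp hj)
  rw [hAm] at hsum_int
  have hk₀1r : (1:ℝ) ≤ (k₀:ℝ) := by exact_mod_cast hk₀1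
  have hfirst : ∫ s in p..A 0, empQuantile s u = ((k₀:ℝ)/n - p) * w (k₀ - 1) := by
    have key : ∀ s ∈ Set.Ioc p (A 0), empQuantile s u = w (k₀ - 1) := by
      intro s hs
      obtain ⟨hs1, hs2⟩ := hs
      rw [hA0] at hs2
      have hs2' : s * n ≤ (k₀:ℝ) := by
        rw [le_div_iff₀ npos] at hs2
        linarith
      have hs0 : 0 < s := lt_trans hp0 hs1
      have hsle1 : s ≤ 1 := le_trans hs2 (by rw [div_le_one npos]; exact_mod_cast hk₀n)
      rw [hQ s hs0 hsle1]
      have hceil : ⌈s * n⌉₊ = k₀ := by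
        rw [Nat.ceil_eq_iff (by omega)]
        constructor
        · rw [Nat.cast_sub hk₀1]
          push_cast
          have : p * n < s * n := by
            apply mul_lt_mul_of_pos_right hs1 npos
          linarith
        · exact hs2'
      rw [hceil]
    rw [integral_eq_of_eqOn_Ioc hpA0 key, hA0]
  have hIQ : ∫ s in p..1, empQuantile s u
      = ((k₀:ℝ)/n - p) * w (k₀ - 1) + ∑ j ∈ Finset.range (n-k₀), (1/(n:ℝ)) * w (k₀ + j) := by
    rw [← intervalIntegral.integral_add_adjacent_intervals
      (hintQ p (A 0) le_rfl hpA0 (hA1 0 (Nat.zero_le _)))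
      (hintQ (A 0) 1 (hApj 0) (hA1 0 (Nat.zero_le _)) le_rfl)]
    rw [hfirst, hsum_int]
  set Sw := ∑ j ∈ Finset.range (n-k₀), w (k₀ + j) with hSwdef
  have hIQ' : supQuantile p u = (1-p)⁻¹ * (((k₀:ℝ)/n - p) * w (k₀-1) + Sw/n) := by
    rw [supQuantile, hIQ]
    congr 1
    rw [← Finset.mul_sum, ← hSwdef]
    ring
  -- rewrite the RU sum in terms of w
  have hsum : ∀ η : ℝ, (∑ i, max (u i - η) 0) = ∑ m ∈ Finset.range n, max (w m - η) 0 := by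
    intro η
    rw [← Equiv.sum_comp σ (fun i => max (u i - η) 0),
      ← Fin.sum_univ_eq_sum_range (fun m => max (w m - η) 0) n]
    refine Finset.sum_congr rfl fun i _ => ?_
    rw [hwv i]
    rfl
  have hsplit : ∀ g : ℕ → ℝ, ∑ m ∈ Finset.range n, g m
      = ∑ m ∈ Finset.range k₀, g m + ∑ j ∈ Finset.range (n-k₀), g (k₀+j) := by
    intro g
    rw [Finset.range_eq_Ico, ← Finset.sum_Ico_consecutive g (Nat.zero_le k₀) hk₀n,
      Nat.Ico_zero_eq_range, Finset.sum_Ico_eq_sum_range]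
  constructor
  · refine ⟨w (k₀ - 1), ?_⟩
    have hval : (∑ i, max (u i - w (k₀-1)) 0) = Sw - ((n:ℝ) - k₀) * w (k₀-1) := by
      rw [hsum, hsplit]
      rw [Finset.sum_eq_zero (fun m hm => by
        simp only [Finset.mem_range] at hm
        have : w m ≤ w (k₀-1) := hwmono (by omega)
        exact max_eq_right (by linarith)), zero_add]
      rw [Finset.sum_congr rfl (fun j _ => by
        have : w (k₀-1) ≤ w (k₀+j) := hwmono (by omega)
        exact max_eq_left (by linarith) :
          ∀ j ∈ Finset.range (n-k₀), max (w (k₀+j) - w (k₀-1)) 0 = w (k₀+j) - w (k₀-1))]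
      rw [Finset.sum_sub_distrib, Finset.sum_const, Finset.card_range, nsmul_eq_mul,
        Nat.cast_sub hk₀n, ← hSwdef]
    show w (k₀-1) + (1/((n:ℝ)*(1-p))) * ∑ i, max (u i - w (k₀-1)) 0 = supQuantile p u
    rw [hval, hIQ']
    field_simp
    ring
  · rintro y ⟨η, rfl⟩
    show supQuantile p u ≤ η + (1/((n:ℝ)*(1-p))) * ∑ i, max (u i - η) 0
    rw [hsum η, hIQ']
    set S := ∑ m ∈ Finset.range n, max (w m - η) 0 with hSdef
    have hf0 : (0:ℝ) ≤ max (w (k₀-1) - η) 0 := le_max_right _ _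
    have hfw : w (k₀-1) - η ≤ max (w (k₀-1) - η) 0 := le_max_left _ _
    have hS : max (w (k₀-1) - η) 0 + (Sw - ((n:ℝ) - k₀) * η) ≤ S := by
      rw [hSdef, hsplit]
      have h1 : max (w (k₀-1) - η) 0 ≤ ∑ m ∈ Finset.range k₀, max (w m - η) 0 :=
        Finset.single_le_sum (f := fun m => max (w m - η) 0)
          (fun i _ => le_max_right _ _) (Finset.mem_range.mpr (by omega))
      have h2 : Sw - ((n:ℝ)-k₀)*η ≤ ∑ j ∈ Finset.range (n-k₀), max (w (k₀+j) - η) 0 := by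
        have he : Sw - ((n:ℝ)-k₀)*η = ∑ j ∈ Finset.range (n-k₀), (w (k₀+j) - η) := by
          rw [Finset.sum_sub_distrib, Finset.sum_const, Finset.card_range, nsmul_eq_mul,
            Nat.cast_sub hk₀n, ← hSwdef]
        rw [he]
        exact Finset.sum_le_sum fun j _ => le_max_left _ _
      linarith
    have hd0 : (0:ℝ) ≤ (k₀:ℝ) - p*n := by linarith
    have hd1 : (k₀:ℝ) - p*n ≤ 1 := by linarith
    have key : ((k₀:ℝ) - p*n) * w (k₀-1) + Sw ≤ (n:ℝ)*(1-p)*η + S := by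
      nlinarith [mul_nonneg hd0 (by linarith : (0:ℝ) ≤ max (w (k₀-1) - η) 0 - (w (k₀-1) - η)),
        mul_nonneg (by linarith : (0:ℝ) ≤ 1 - ((k₀:ℝ) - p*n)) hf0]
    have goal2 : ((k₀:ℝ)/n - p) * w (k₀-1) + Sw/n ≤ (1-p)*η + S/n := by
      calc ((k₀:ℝ)/n - p) * w (k₀-1) + Sw/n
          = (((k₀:ℝ) - p*n)*w (k₀-1) + Sw)/n := by
            have hninv : (n:ℝ)*(n:ℝ)⁻¹ = 1 := mul_inv_cancel₀ hnne
            linear_combination (p * w (k₀-1)) * hninv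
        _ ≤ ((n:ℝ)*(1-p)*η + S)/n := by gcongr
        _ = (1-p)*η + S/n := by field_simp
    calc (1-p)⁻¹ * (((k₀:ℝ)/n - p) * w (k₀-1) + Sw/n)
        ≤ (1-p)⁻¹ * ((1-p)*η + S/n) :=
          mul_le_mul_of_nonneg_left goal2 (inv_nonneg.mpr h1p.le)
      _ = η + (1/((n:ℝ)*(1-p))) * S := by field_simp
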